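/- Variance bound for the empirical-vs-mean term: let X_{1/N}, …, X_{N/N} be independent 𝕏-valued random variables, g : 𝕏² → ℝ bounded by B_g, and A^N a matrix with Σ_{j=1}^N (A^N_{ij})² ≤ KN for every i. Then for each i, 𝔼| (1/N) Σ_{j=1}^N A^N_{ij} ( g(x, X_{j/N}) − 𝔼[g(x, X_{j/N})] ) |² ≤ 4 B_g² K / N for every fixed x ∈ 𝕏. -/

import Mathlib

open MeasureTheory Set

/-- variance bound for the empirical-vs-mean term. If X_{1/N},…,X_{N/N}
are independent, g is bounded by B_g, and Σ_j (A^N_{ij})² ≤ K·N for every i, then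
𝔼| (1/N) Σ_j A_{ij} ( g(x, X_{j/N}) − 𝔼 g(x, X_{j/N}) ) |² ≤ 4 B_g² K / N. -/
theorem stmt_10 {Ω S X' : Type*} [MeasurableSpace Ω] [MeasurableSpace S]
    (P : Measure Ω) [IsProbabilityMeasure P]
    (N : ℕ) (hN : 0 < N)
    (Xp : Fin N → Ω → S) (hmeas : ∀ j, Measurable (Xp j))
    (hindep : ProbabilityTheory.iIndepFun Xp P)
    (g : X' → S → ℝ) (Bg : ℝ) (hg : ∀ x y, |g x y| ≤ Bg)
    (hgm : ∀ x, Measurable (g x))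
    (A : Fin N → Fin N → ℝ) (K : ℝ)
    (hA : ∀ i, ∑ j : Fin N, (A i j) ^ 2 ≤ K * N) :
    ∀ (i : Fin N) (x : X'),
      (∫ ω, ((1 / (N:ℝ)) * ∑ j : Fin N,
          A i j * (g x (Xp j ω) - ∫ ω', g x (Xp j ω') ∂P)) ^ 2 ∂P)
        ≤ 4 * Bg ^ 2 * K / N := by
  intro i x
  set c : Fin N → ℝ := fun j => ∫ ω', g x (Xp j ω') ∂P with hc
  set φ : Fin N → S → ℝ := fun j s => A i j * (g x s - c j) with hφ
  set Y : Fin N → Ω → ℝ := fun j ω => φ j (Xp j ω) with hY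
  have hΩ : Nonempty Ω := by
    by_contra h
    rw [not_nonempty_iff] at h
    have := measure_univ (μ := P)
    simp [Set.univ_eq_empty_iff.2 h] at this
  obtain ⟨ω₀⟩ := hΩ
  have hBg : 0 ≤ Bg := le_trans (abs_nonneg _) (hg x (Xp i ω₀))
  have hφm : ∀ j, Measurable (φ j) := fun j =>
    ((hgm x).sub measurable_const).const_mul _
  have hYm : ∀ j, Measurable (Y j) := fun j => (hφm j).comp (hmeas j)
  have hYbd : ∀ j ω, |Y j ω| ≤ |A i j| * (2 * Bg) := by
    intro j ω
    rw [hY, hφ]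
    simp only [abs_mul]
    refine mul_le_mul_of_nonneg_left ?_ (abs_nonneg _)
    have hcj : |c j| ≤ Bg := by
      rw [hc]
      have h := norm_integral_le_of_norm_le_const (μ := P)
        (f := fun ω' => g x (Xp j ω')) (C := Bg)
        (by filter_upwards with ω'; simpa using hg x (Xp j ω'))
      simpa using h
    calc |g x (Xp j ω) - c j| ≤ |g x (Xp j ω)| + |c j| := abs_sub _ _
      _ ≤ Bg + Bg := add_le_add (hg _ _) hcj
      _ = 2 * Bg := by ring
  have hYL2 : ∀ j, MemLp (Y j) 2 P := by
    intro j
    refine MemLp.of_bound (hYm j).aestronglyMeasurable (|A i j| * (2 * Bg)) ?_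
    filter_upwards with ω
    simpa using hYbd j ω
  have hgint : ∀ j, Integrable (fun ω => g x (Xp j ω)) P := by
    intro j
    refine Integrable.mono' (integrable_const Bg) ((hgm x).comp (hmeas j)).aestronglyMeasurable ?_
    filter_upwards with ω
    simpa using hg x (Xp j ω)
  have hYmean : ∀ j, ∫ ω, Y j ω ∂P = 0 := by
    intro j
    rw [hY, hφ]
    simp only
    rw [integral_const_mul, integral_sub (hgint j) (integrable_const _)]
    simp [hc]
  -- pairwise independence of the Y's
  have hYindep : Set.Pairwise ↑(Finset.univ : Finset (Fin N))
      (fun j k => ProbabilityTheory.IndepFun (Y j) (Y k) P) := by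
    intro j _ k _ hjk
    exact (hindep.indepFun hjk).comp (hφm j) (hφm k)
  -- variance of each Y
  have hYvar : ∀ j, ProbabilityTheory.variance (Y j) P ≤ (A i j) ^ 2 * (4 * Bg ^ 2) := by
    intro j
    refine le_trans (ProbabilityTheory.variance_le_expectation_sq
      (hYm j).aestronglyMeasurable) ?_
    calc (∫ ω, (Y j ω) ^ 2 ∂P) ≤ ∫ _ω, (|A i j| * (2 * Bg)) ^ 2 ∂P := by
          refine integral_mono (hYL2 j).integrable_sq (integrable_const _) ?_
          intro ω
          have := hYbd j ω
          calc (Y j ω) ^ 2 = |Y j ω| ^ 2 := (sq_abs _).symm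
            _ ≤ (|A i j| * (2 * Bg)) ^ 2 :=
              pow_le_pow_left₀ (abs_nonneg _) this 2
      _ = (|A i j| * (2 * Bg)) ^ 2 := by simp
      _ = (A i j) ^ 2 * (4 * Bg ^ 2) := by rw [mul_pow, sq_abs]; ring
  set SY : Ω → ℝ := fun ω => ∑ j : Fin N, Y j ω with hSY
  have hSYL2 : MemLp SY 2 P := by
    have : MemLp (∑ j : Fin N, Y j) 2 P :=
      memLp_finsetSum' _ (fun j _ => hYL2 j)
    convert this using 1
    ext ω; simp [hSY]
  have hSYmean : ∫ ω, SY ω ∂P = 0 := by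
    rw [hSY]
    rw [integral_finset_sum _ (fun j _ => ((hYL2 j).integrable one_le_two))]
    simp [hYmean]
  have hvar_sum : ProbabilityTheory.variance (∑ j : Fin N, Y j) P
      = ∑ j : Fin N, ProbabilityTheory.variance (Y j) P :=
    ProbabilityTheory.IndepFun.variance_sum (fun j _ => hYL2 j) hYindep
  have hSYsq : (∫ ω, (SY ω) ^ 2 ∂P) = ∑ j : Fin N, ProbabilityTheory.variance (Y j) P := by
    have h1 := ProbabilityTheory.variance_eq_sub (μ := P) hSYL2
    have h2 : (∫ ω, (SY ^ 2) ω ∂P) = ∫ ω, (SY ω) ^ 2 ∂P := by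
      congr 1
    have h4 : ProbabilityTheory.variance SY P
        = ProbabilityTheory.variance (∑ j : Fin N, Y j) P := by
      congr 1; ext ω; simp [hSY]
    rw [h4, hvar_sum, h2, hSYmean] at h1
    linarith
  have hbound : (∫ ω, (SY ω) ^ 2 ∂P) ≤ 4 * Bg ^ 2 * (K * N) := by
    rw [hSYsq]
    calc ∑ j : Fin N, ProbabilityTheory.variance (Y j) P
        ≤ ∑ j : Fin N, (A i j) ^ 2 * (4 * Bg ^ 2) :=
          Finset.sum_le_sum (fun j _ => hYvar j)
      _ = (∑ j : Fin N, (A i j) ^ 2) * (4 * Bg ^ 2) := by rw [Finset.sum_mul]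
      _ ≤ (K * N) * (4 * Bg ^ 2) := by
          refine mul_le_mul_of_nonneg_right (hA i) (by positivity)
      _ = 4 * Bg ^ 2 * (K * N) := by ring
  have hNpos : (0:ℝ) < N := by exact_mod_cast hN
  have key : (∫ ω, ((1 / (N:ℝ)) * ∑ j : Fin N,
      A i j * (g x (Xp j ω) - ∫ ω', g x (Xp j ω') ∂P)) ^ 2 ∂P)
      = (1 / (N:ℝ)) ^ 2 * ∫ ω, (SY ω) ^ 2 ∂P := by
    rw [← integral_const_mul]
    congr 1
    ext ω
    rw [mul_pow]
  rw [key]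
  calc (1 / (N:ℝ)) ^ 2 * ∫ ω, (SY ω) ^ 2 ∂P
      ≤ (1 / (N:ℝ)) ^ 2 * (4 * Bg ^ 2 * (K * N)) := by
        refine mul_le_mul_of_nonneg_left hbound (by positivity)
    _ = 4 * Bg ^ 2 * K / N := by field_simp
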